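/- Let m ≥ 2 and let h, h' : Fin m → ℤ satisfy h i ≤ h' i ≤ h i + 1 for every i. Then for every j with 1 ≤ j ≤ m − 1, the gap utilities u(j) = h_(j) − h_(j+1) and u'(j) = h'_(j) − h'_(j+1) satisfy |u(j) − u'(j)| ≤ 1. In particular, the utility function j ↦ h_(j) − h_(j+1) + r(j) (for any fixed regularizer r : Fin (m−1) → ℝ) has sensitivity at most 1 with respect to adding or removing one user. -/

import Mathlib

/-- `kthLargest h k` is the `k`-th largest entry of `h` (0-indexed: `k = 0` is the
largest). -/
def kthLargest {m : ℕ} (h : Fin m → ℤ) (k : Fin m) : ℤ :=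
  h (Tuple.sort h k.rev)

/-- The gap utility `u(j) = h_(j) - h_(j+1)` where `h_(j)` denotes the `j`-th largest
entry (1-indexed, so `1 ≤ j ≤ m - 1`). -/
def gapU {m : ℕ} (h : Fin m → ℤ) (j : ℕ) (h1 : 1 ≤ j) (h2 : j < m) : ℤ :=
  kthLargest h ⟨j - 1, by omega⟩ - kthLargest h ⟨j, h2⟩

lemma sorted_le_sorted_add {m : ℕ} (f g : Fin m → ℤ) (c : ℤ)
    (hfg : ∀ i, f i ≤ g i + c) (k : Fin m) :
    f (Tuple.sort f k) ≤ g (Tuple.sort g k) + c := by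
  have hA : ((Finset.Ici k).image (Tuple.sort f)).card = m - k := by
    rw [Finset.card_image_of_injective _ (Tuple.sort f).injective, Fin.card_Ici]
  have hB : ((Finset.Iic k).image (Tuple.sort g)).card = k + 1 := by
    rw [Finset.card_image_of_injective _ (Tuple.sort g).injective, Fin.card_Iic]
  have hcap : ((Finset.Ici k).image (Tuple.sort f) ∩
      (Finset.Iic k).image (Tuple.sort g)).Nonempty := by
    rw [← Finset.card_pos]
    have hunion : ((Finset.Ici k).image (Tuple.sort f) ∪
        (Finset.Iic k).image (Tuple.sort g)).card ≤ m := by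
      have := Finset.card_le_card (Finset.subset_univ
        ((Finset.Ici k).image (Tuple.sort f) ∪ (Finset.Iic k).image (Tuple.sort g)))
      simpa using this
    have := Finset.card_union_add_card_inter
      ((Finset.Ici k).image (Tuple.sort f)) ((Finset.Iic k).image (Tuple.sort g))
    have hk := k.isLt
    omega
  obtain ⟨a, ha⟩ := hcap
  rw [Finset.mem_inter, Finset.mem_image, Finset.mem_image] at ha
  obtain ⟨⟨t, ht, hta⟩, ⟨s, hs, hsa⟩⟩ := ha
  rw [Finset.mem_Ici] at ht
  rw [Finset.mem_Iic] at hs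
  calc f (Tuple.sort f k) ≤ f (Tuple.sort f t) := Tuple.monotone_sort f ht
    _ = f a := by rw [hta]
    _ ≤ g a + c := hfg a
    _ = g (Tuple.sort g s) + c := by rw [hsa]
    _ ≤ g (Tuple.sort g k) + c := by
        exact add_le_add_left (Tuple.monotone_sort g hs) c

lemma kthLargest_close {m : ℕ} (h h' : Fin m → ℤ)
    (hnb : ∀ i, h i ≤ h' i ∧ h' i ≤ h i + 1) (k : Fin m) :
    kthLargest h k ≤ kthLargest h' k ∧ kthLargest h' k ≤ kthLargest h k + 1 := by
  constructor
  · have := sorted_le_sorted_add h h' 0 (fun i => by linarith [(hnb i).1]) k.rev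
    simpa [kthLargest] using this
  · exact sorted_le_sorted_add h' h 1 (fun i => (hnb i).2) k.rev

theorem gap_utility_sensitivity_one {m : ℕ} (hm : 2 ≤ m) (h h' : Fin m → ℤ)
    (hnb : ∀ i, h i ≤ h' i ∧ h' i ≤ h i + 1)
    (j : ℕ) (h1 : 1 ≤ j) (h2 : j ≤ m - 1) :
    |gapU h j h1 (by omega) - gapU h' j h1 (by omega)| ≤ 1 ∧
      ∀ r : ℕ → ℝ,
        |(((gapU h j h1 (by omega) : ℤ) : ℝ) + r j) -
            (((gapU h' j h1 (by omega) : ℤ) : ℝ) + r j)| ≤ 1 := by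
  have key : |gapU h j h1 (by omega) - gapU h' j h1 (by omega)| ≤ 1 := by
    unfold gapU
    obtain ⟨ha1, ha2⟩ := kthLargest_close h h' hnb ⟨j - 1, by omega⟩
    obtain ⟨hb1, hb2⟩ := kthLargest_close h h' hnb ⟨j, by omega⟩
    rw [abs_le]
    omega
  refine ⟨key, fun r => ?_⟩
  have : (((gapU h j h1 (by omega) : ℤ) : ℝ) + r j) -
      (((gapU h' j h1 (by omega) : ℤ) : ℝ) + r j)
      = ((gapU h j h1 (by omega) - gapU h' j h1 (by omega) : ℤ) : ℝ) := by
    push_cast; ring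
  rw [this, ← Int.cast_abs]
  exact_mod_cast key
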